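/- Let A, S, T be finite sets of points in ℝ × ℝ, all of whose points have both coordinates in the interval [−1, 1], with |A| ≤ |S|. Let δ ≥ 0 and let γ : S → T be a bijection such that for every s ∈ S both |s₁ − γ(s)₁| ≤ δ and |s₂ − γ(s)₂| ≤ δ. Then min over injections τ : A → T of Σ_{a ∈ A} ((a₁ − τ(a)₁)² + (a₂ − τ(a)₂)²) is at most (min over injections σ : A → S of Σ_{a ∈ A} ((a₁ − σ(a)₁)² + (a₂ − σ(a)₂)²)) + |A|·(8δ + 2δ²), and symmetrically the minimum over injections into S is at most the minimum over injections into T plus |A|·(8δ + 2δ²). -/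
import Mathlib


/-- The matching cost of an injection `σ` from `A`. -/
noncomputable def matchingCost (A : Finset (ℝ × ℝ)) (σ : ℝ × ℝ → ℝ × ℝ) : ℝ :=
  ∑ a ∈ A, ((a.1 - (σ a).1) ^ 2 + (a.2 - (σ a).2) ^ 2)

/-- The set of matching costs over all injections from `A` into `S`. -/
def matchingCosts (A S : Finset (ℝ × ℝ)) : Set ℝ :=
  {c | ∃ σ : ℝ × ℝ → ℝ × ℝ, Set.MapsTo σ ↑A ↑S ∧ Set.InjOn σ ↑A ∧ c = matchingCost A σ}

lemma matchingCosts_bddBelow (A S : Finset (ℝ × ℝ)) : BddBelow (matchingCosts A S) := by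
  refine ⟨0, fun c hc => ?_⟩
  obtain ⟨σ, -, -, rfl⟩ := hc
  exact Finset.sum_nonneg fun a _ => by positivity

lemma matchingCosts_nonempty (A S : Finset (ℝ × ℝ)) (h : A.card ≤ S.card) :
    (matchingCosts A S).Nonempty := by
  have hfin : (↑A : Set (ℝ × ℝ)).Finite := A.finite_toSet
  have hle : (↑A : Set (ℝ × ℝ)).encard ≤ (↑S : Set (ℝ × ℝ)).encard := by
    rw [Set.encard_coe_eq_coe_finsetCard, Set.encard_coe_eq_coe_finsetCard]
    exact_mod_cast h
  obtain ⟨f, hf1, hf2⟩ := hfin.exists_injOn_of_encard_le hle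
  exact ⟨matchingCost A f, f, hf1, hf2, rfl⟩

/-- Key one-sided estimate. -/
lemma cost_step (A S T : Finset (ℝ × ℝ))
    (hA : ∀ a ∈ A, a.1 ∈ Set.Icc (-1 : ℝ) 1 ∧ a.2 ∈ Set.Icc (-1 : ℝ) 1)
    (hS : ∀ s ∈ S, s.1 ∈ Set.Icc (-1 : ℝ) 1 ∧ s.2 ∈ Set.Icc (-1 : ℝ) 1)
    (hcard : A.card ≤ S.card)
    (δ : ℝ) (hδ : 0 ≤ δ)
    (g : ℝ × ℝ → ℝ × ℝ) (hmap : Set.MapsTo g ↑S ↑T) (hinj : Set.InjOn g ↑S)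
    (hgδ : ∀ s ∈ S, |s.1 - (g s).1| ≤ δ ∧ |s.2 - (g s).2| ≤ δ) :
    sInf (matchingCosts A T) ≤
      sInf (matchingCosts A S) + (A.card : ℝ) * (8 * δ + 2 * δ ^ 2) := by
  have hne : (matchingCosts A S).Nonempty := matchingCosts_nonempty A S hcard
  have key : ∀ c ∈ matchingCosts A S,
      sInf (matchingCosts A T) ≤ c + (A.card : ℝ) * (8 * δ + 2 * δ ^ 2) := by
    rintro c ⟨σ, hσmap, hσinj, rfl⟩
    have hmem : matchingCost A (g ∘ σ) ∈ matchingCosts A T :=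
      ⟨g ∘ σ, hmap.comp hσmap, hinj.comp hσinj hσmap, rfl⟩
    have hle : matchingCost A (g ∘ σ) ≤
        matchingCost A σ + (A.card : ℝ) * (8 * δ + 2 * δ ^ 2) := by
      unfold matchingCost
      have hsum : (A.card : ℝ) * (8 * δ + 2 * δ ^ 2)
          = ∑ _a ∈ A, (8 * δ + 2 * δ ^ 2) := by
        rw [Finset.sum_const, nsmul_eq_mul]
      rw [hsum, ← Finset.sum_add_distrib]
      refine Finset.sum_le_sum fun a ha => ?_
      have hsa : σ a ∈ S := hσmap ha
      obtain ⟨ha1, ha2⟩ := hA a ha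
      obtain ⟨hs1, hs2⟩ := hS (σ a) hsa
      obtain ⟨hd1, hd2⟩ := hgδ (σ a) hsa
      simp only [Set.mem_Icc] at ha1 ha2 hs1 hs2
      rw [abs_le] at hd1 hd2
      simp only [Function.comp_apply]
      nlinarith [sq_nonneg (a.1 - (σ a).1), sq_nonneg (a.2 - (σ a).2)]
    exact (csInf_le (matchingCosts_bddBelow A T) hmem).trans hle
  have : sInf (matchingCosts A T) - (A.card : ℝ) * (8 * δ + 2 * δ ^ 2) ≤
      sInf (matchingCosts A S) :=
    le_csInf hne fun c hc => by linarith [key c hc]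
  linarith

theorem optimal_matching_cost_stability
    (A S T : Finset (ℝ × ℝ))
    (hA : ∀ a ∈ A, a.1 ∈ Set.Icc (-1 : ℝ) 1 ∧ a.2 ∈ Set.Icc (-1 : ℝ) 1)
    (hS : ∀ s ∈ S, s.1 ∈ Set.Icc (-1 : ℝ) 1 ∧ s.2 ∈ Set.Icc (-1 : ℝ) 1)
    (hT : ∀ t ∈ T, t.1 ∈ Set.Icc (-1 : ℝ) 1 ∧ t.2 ∈ Set.Icc (-1 : ℝ) 1)
    (hcard : A.card ≤ S.card)
    (δ : ℝ) (hδ : 0 ≤ δ)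
    (γ : ℝ × ℝ → ℝ × ℝ) (hγ : Set.BijOn γ ↑S ↑T)
    (hγδ : ∀ s ∈ S, |s.1 - (γ s).1| ≤ δ ∧ |s.2 - (γ s).2| ≤ δ) :
    sInf (matchingCosts A T) ≤
        sInf (matchingCosts A S) + (A.card : ℝ) * (8 * δ + 2 * δ ^ 2) ∧
      sInf (matchingCosts A S) ≤
        sInf (matchingCosts A T) + (A.card : ℝ) * (8 * δ + 2 * δ ^ 2) := by
  have hcardT : S.card = T.card := by
    have h2 := Set.ncard_image_of_injOn hγ.injOn
    rw [hγ.image_eq, Set.ncard_coe_finset, Set.ncard_coe_finset] at h2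
    exact h2.symm
  have hcardT' : A.card ≤ T.card := hcardT ▸ hcard
  -- inverse map
  set g := Function.invFunOn γ ↑S with hg
  have hinvOn : Set.InvOn g γ ↑S ↑T := hγ.invOn_invFunOn
  have hgmap : Set.MapsTo g ↑T ↑S := hγ.surjOn.mapsTo_invFunOn
  have hgbij : Set.BijOn g ↑T ↑S := hinvOn.symm.bijOn hgmap hγ.mapsTo
  have hgδ : ∀ t ∈ T, |t.1 - (g t).1| ≤ δ ∧ |t.2 - (g t).2| ≤ δ := by
    intro t ht
    have hgs : g t ∈ S := hgmap ht
    have heq : γ (g t) = t := hinvOn.2 ht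
    obtain ⟨h1, h2⟩ := hγδ (g t) hgs
    rw [heq] at h1 h2
    exact ⟨by rw [abs_sub_comm]; exact h1, by rw [abs_sub_comm]; exact h2⟩
  constructor
  · exact cost_step A S T hA hS hcard δ hδ γ hγ.mapsTo hγ.injOn hγδ
  · exact cost_step A T S hA hT hcardT' δ hδ g hgbij.mapsTo hgbij.injOn hgδ
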